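/- Let n ≥ 1 and let X be a nonempty type of auxiliary values. Suppose p_k, p̂_k : ℝ → X → ℝ (k ∈ Fin n) are coordinate densities that are strictly positive and C² in their first argument, and h : (Fin n → ℝ) → (Fin n → ℝ) is a bijection that is C² with C² inverse such that for every x ∈ X the pushforward under h of the measure (volume on Fin n → ℝ).withDensity (s ↦ ENNReal.ofReal (∏_k p_k (s k) x)) equals (volume on Fin n → ℝ).withDensity (s ↦ ENNReal.ofReal (∏_k p̂_k (s k) x)). For s : Fin n → ℝ and x ∈ X define w(s,x) ∈ Fin (2n) → ℝ by w(s,x)_k = (first derivative of t ↦ log (p_k t x)) evaluated at s k for k < n, and w(s,x)_{n+k} = (second derivative of t ↦ log (p_k t x)) evaluated at s k for k < n. Assume that for every s there exist x₀, x₁, …, x_{2n} ∈ X such that the 2n vectors w(s,x_j) − w(s,x₀), j = 1,…,2n, are linearly independent in Fin (2n) → ℝ. Let g denote the inverse of h. Then for every point ŝ : Fin n → ℝ, every k ∈ Fin n, and all i ≠ j in Fin n: (fderiv ℝ g ŝ (Pi.single i 1) k) * (fderiv ℝ g ŝ (Pi.single j 1) k) = 0, and the mixed second partial derivative of the k-th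 component of g in the directions i and j vanishes at ŝ, i.e., fderiv ℝ (u ↦ fderiv ℝ g u (Pi.single j 1) k) ŝ (Pi.single i 1) = 0. -/

import Mathlib

open MeasureTheory

lemma density_identity {n : ℕ} (ρ ρ' : (Fin n → ℝ) → ℝ)
    (hρc : Continuous ρ) (hρ'c : Continuous ρ')
    (hρpos : ∀ s, 0 < ρ s) (hρ'pos : ∀ s, 0 < ρ' s)
    (h g : (Fin n → ℝ) → (Fin n → ℝ)) (hgC2 : ContDiff ℝ 2 g)
    (hc : Continuous h)
    (hgh : Function.LeftInverse g h) (hhg : Function.RightInverse g h)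
    (hmap : Measure.map h ((volume : Measure (Fin n → ℝ)).withDensity fun s => ENNReal.ofReal (ρ s))
      = (volume : Measure (Fin n → ℝ)).withDensity fun s => ENNReal.ofReal (ρ' s)) :
    ∀ u, ρ' u = |(fderiv ℝ g u).det| * ρ (g u) := by
  have hgdiff : Differentiable ℝ g := hgC2.differentiable two_ne_zero
  have hgcont : Continuous g := hgdiff.continuous
  have hginj : Function.Injective g := hhg.injective
  have hF : Measurable fun u => ENNReal.ofReal (ρ' u) :=
    (ENNReal.continuous_ofReal.comp hρ'c).measurable
  have hGc : Continuous fun u => ENNReal.ofReal (|(fderiv ℝ g u).det| * ρ (g u)) :=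
    ENNReal.continuous_ofReal.comp ((ContinuousLinearMap.continuous_det.comp
      (hgC2.continuous_fderiv two_ne_zero)).abs.mul (hρc.comp hgcont))
  have key : ∀ A : Set (Fin n → ℝ), MeasurableSet A → volume A < ⊤ →
      (∫⁻ u in A, ENNReal.ofReal (ρ' u)) =
      ∫⁻ u in A, ENNReal.ofReal (|(fderiv ℝ g u).det| * ρ (g u)) := by
    intro A hA _
    have h1 : (∫⁻ u in A, ENNReal.ofReal (ρ' u)) =
        ((volume : Measure (Fin n → ℝ)).withDensity fun s => ENNReal.ofReal (ρ' s)) A :=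
      (withDensity_apply _ hA).symm
    have h2 : h ⁻¹' A = g '' A := by
      ext s; constructor
      · intro hs; exact ⟨h s, hs, hgh s⟩
      · rintro ⟨u, hu, rfl⟩; simpa [hhg u] using hu
    rw [h1, ← hmap, Measure.map_apply hc.measurable hA,
      withDensity_apply _ (hc.measurable hA), h2]
    rw [lintegral_image_eq_lintegral_abs_det_fderiv_mul volume hA
      (fun u _ => (hgdiff u).hasFDerivAt.hasFDerivWithinAt) hginj.injOn _]
    congr 1; ext u; rw [← ENNReal.ofReal_mul (abs_nonneg _)]
  have hae := ae_eq_of_forall_setLIntegral_eq_of_sigmaFinite hF hGc.measurable key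
  have heq := (Continuous.ae_eq_iff_eq volume (ENNReal.continuous_ofReal.comp hρ'c) hGc).mp hae
  intro u
  exact (ENNReal.ofReal_eq_ofReal_iff (hρ'pos u).le
    (mul_nonneg (abs_nonneg _) (hρpos (g u)).le)).mp (congrFun heq u)

lemma contDiff_one_deriv {f : ℝ → ℝ} (hf : ContDiff ℝ 2 f) : ContDiff ℝ 1 (deriv f) := by
  have h2 : ContDiff ℝ ((1 : WithTop ℕ∞) + 1) f := by norm_num; exact_mod_cast hf
  exact (contDiff_succ_iff_deriv.mp h2).2.2

lemma second_partial_formula {n : ℕ} (g : (Fin n → ℝ) → (Fin n → ℝ)) (hgC2 : ContDiff ℝ 2 g)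
    (L M : Fin n → ℝ → ℝ) (hL : ∀ k, ContDiff ℝ 2 (L k)) (hM : ∀ k, ContDiff ℝ 2 (M k))
    (i j : Fin n) (hij : i ≠ j) (s : Fin n → ℝ) :
    fderiv ℝ (fun u => fderiv ℝ (fun v => (∑ k, L k (g v k)) + ∑ k, M k (v k)) u
        (Pi.single j 1)) s (Pi.single i 1)
      = ∑ k, (deriv (deriv (L k)) (g s k) *
            (fderiv ℝ g s (Pi.single i 1) k * fderiv ℝ g s (Pi.single j 1) k)
          + deriv (L k) (g s k) *
            fderiv ℝ (fun u => fderiv ℝ g u (Pi.single j 1) k) s (Pi.single i 1)) := by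
  have hgdiff : Differentiable ℝ g := hgC2.differentiable two_ne_zero
  have A1 : ∀ u, fderiv ℝ (fun v => (∑ k, L k (g v k)) + ∑ k, M k (v k)) u (Pi.single j 1)
      = (∑ k, deriv (L k) (g u k) * fderiv ℝ g u (Pi.single j 1) k)
        + ∑ k, deriv (M k) (u k) * (Pi.single j 1 : Fin n → ℝ) k := by
    intro u
    have hinner : ∀ k : Fin n, HasFDerivAt (fun v : Fin n → ℝ => g v k)
        ((ContinuousLinearMap.proj k).comp (fderiv ℝ g u)) u :=
      fun k => by
        simpa [Function.comp_def] using
          ((ContinuousLinearMap.proj k).hasFDerivAt.comp u (hgdiff u).hasFDerivAt)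
    have hLt : ∀ k : Fin n, HasFDerivAt (fun v => L k (g v k))
        (deriv (L k) (g u k) • ((ContinuousLinearMap.proj k).comp (fderiv ℝ g u))) u :=
      fun k => by
        simpa [Function.comp_def] using
          ((((hL k).differentiable two_ne_zero (g u k)).hasDerivAt).comp_hasFDerivAt u (hinner k))
    have hMt : ∀ k : Fin n, HasFDerivAt (fun v : Fin n → ℝ => M k (v k))
        (deriv (M k) (u k) • (ContinuousLinearMap.proj k : (Fin n → ℝ) →L[ℝ] ℝ)) u :=
      fun k => by
        have hp : HasFDerivAt (fun v : Fin n → ℝ => v k)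
            (ContinuousLinearMap.proj k : (Fin n → ℝ) →L[ℝ] ℝ) u := hasFDerivAt_apply k u
        simpa [Function.comp_def] using
          ((((hM k).differentiable two_ne_zero (u k)).hasDerivAt).comp_hasFDerivAt u hp)
    have hbig : HasFDerivAt (fun v => (∑ k, L k (g v k)) + ∑ k, M k (v k))
        ((∑ k, deriv (L k) (g u k) • ((ContinuousLinearMap.proj k).comp (fderiv ℝ g u)))
          + ∑ k, deriv (M k) (u k) • (ContinuousLinearMap.proj k : (Fin n → ℝ) →L[ℝ] ℝ)) u :=
      (HasFDerivAt.fun_sum fun k _ => hLt k).add (HasFDerivAt.fun_sum fun k _ => hMt k)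
    rw [hbig.fderiv]
    simp [ContinuousLinearMap.sum_apply]
  rw [show (fun u => fderiv ℝ (fun v => (∑ k, L k (g v k)) + ∑ k, M k (v k)) u (Pi.single j 1))
      = fun u => (∑ k, deriv (L k) (g u k) * fderiv ℝ g u (Pi.single j 1) k)
        + ∑ k, deriv (M k) (u k) * (Pi.single j 1 : Fin n → ℝ) k from funext A1]
  have hdL : ∀ k, ContDiff ℝ 1 (deriv (L k)) := fun k => contDiff_one_deriv (hL k)
  have hdM : ∀ k, ContDiff ℝ 1 (deriv (M k)) := fun k => contDiff_one_deriv (hM k)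
  have hinner : ∀ k : Fin n, HasFDerivAt (fun v : Fin n → ℝ => g v k)
      ((ContinuousLinearMap.proj k).comp (fderiv ℝ g s)) s :=
    fun k => by
      simpa [Function.comp_def] using
        ((ContinuousLinearMap.proj k).hasFDerivAt.comp s (hgdiff s).hasFDerivAt)
  have hf1 : ∀ k : Fin n, HasFDerivAt (fun u => deriv (L k) (g u k))
      (deriv (deriv (L k)) (g s k) • ((ContinuousLinearMap.proj k).comp (fderiv ℝ g s))) s :=
    fun k => by
      simpa [Function.comp_def] using
        ((((hdL k).differentiable one_ne_zero (g s k)).hasDerivAt).comp_hasFDerivAt s (hinner k))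
  have hf2diff : ∀ k : Fin n, DifferentiableAt ℝ (fun u => fderiv ℝ g u (Pi.single j 1) k) s := by
    intro k
    have hC : ContDiff ℝ 1 (fderiv ℝ g) := hgC2.fderiv_right (le_refl _)
    have : ContDiff ℝ 1 (fun u => fderiv ℝ g u (Pi.single j 1) k) := by
      have e : (fun u => fderiv ℝ g u (Pi.single j 1) k)
          = (fun T : (Fin n → ℝ) →L[ℝ] (Fin n → ℝ) => T (Pi.single j 1) k) ∘ (fderiv ℝ g) := rfl
      rw [e]
      exact (((ContinuousLinearMap.proj k).comp
        (ContinuousLinearMap.apply ℝ (Fin n → ℝ) (Pi.single j 1))).contDiff).comp hC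
    exact this.differentiable one_ne_zero s
  have hf2 : ∀ k : Fin n, HasFDerivAt (fun u => fderiv ℝ g u (Pi.single j 1) k)
      (fderiv ℝ (fun u => fderiv ℝ g u (Pi.single j 1) k) s) s :=
    fun k => (hf2diff k).hasFDerivAt
  have hterm : ∀ k : Fin n, HasFDerivAt
      (fun u => deriv (L k) (g u k) * fderiv ℝ g u (Pi.single j 1) k)
      (deriv (L k) (g s k) • (fderiv ℝ (fun u => fderiv ℝ g u (Pi.single j 1) k) s)
        + fderiv ℝ g s (Pi.single j 1) k •
          (deriv (deriv (L k)) (g s k) • ((ContinuousLinearMap.proj k).comp (fderiv ℝ g s)))) s :=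
    fun k => (hf1 k).mul (hf2 k)
  have hMterm : ∀ k : Fin n, HasFDerivAt
      (fun u => deriv (M k) (u k) * (Pi.single j 1 : Fin n → ℝ) k)
      ((Pi.single j 1 : Fin n → ℝ) k • (deriv (deriv (M k)) (s k) •
        (ContinuousLinearMap.proj k : (Fin n → ℝ) →L[ℝ] ℝ))) s :=
    fun k => by
      have hp : HasFDerivAt (fun v : Fin n → ℝ => v k)
          (ContinuousLinearMap.proj k : (Fin n → ℝ) →L[ℝ] ℝ) s := hasFDerivAt_apply k s
      have := ((((hdM k).differentiable one_ne_zero (s k)).hasDerivAt).comp_hasFDerivAt s hp).mul_const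
        ((Pi.single j 1 : Fin n → ℝ) k)
      simpa [Function.comp_def] using this
  have hbig := (HasFDerivAt.fun_sum (fun k (_ : k ∈ Finset.univ) => hterm k)).fun_add
    (HasFDerivAt.fun_sum fun k (_ : k ∈ Finset.univ) => hMterm k)
  rw [hbig.fderiv]
  have hzero : ∀ k : Fin n, (Pi.single i 1 : Fin n → ℝ) k * (Pi.single j 1 : Fin n → ℝ) k = 0 := by
    intro k
    rcases eq_or_ne k i with rfl | hki
    · rw [Pi.single_eq_of_ne hij, mul_zero]
    · rw [Pi.single_eq_of_ne hki, zero_mul]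
  simp only [ContinuousLinearMap.add_apply, ContinuousLinearMap.sum_apply,
    ContinuousLinearMap.smul_apply, ContinuousLinearMap.comp_apply,
    ContinuousLinearMap.proj_apply, smul_eq_mul]
  have hz : ∑ x : Fin n, (Pi.single j 1 : Fin n → ℝ) x *
      (deriv (deriv (M x)) (s x) * (Pi.single i 1 : Fin n → ℝ) x) = 0 := by
    refine Finset.sum_eq_zero fun k _ => ?_
    have h0 := hzero k
    calc (Pi.single j 1 : Fin n → ℝ) k * (deriv (deriv (M k)) (s k) * (Pi.single i 1 : Fin n → ℝ) k)
        = deriv (deriv (M k)) (s k) * ((Pi.single i 1 : Fin n → ℝ) k * (Pi.single j 1 : Fin n → ℝ) k) := by ring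
      _ = 0 := by rw [h0, mul_zero]
  rw [hz, add_zero]
  refine Finset.sum_congr rfl fun k _ => ?_
  ring

/-- The central intermediate claim in the proof of Theorem 1: under the
matched factorized-density generation processes and assumption (A3), every
row of the Jacobian of the inverse indeterminacy map `g = h⁻¹` has at most
one nonzero entry and its mixed second partial derivatives vanish. -/
theorem inverse_indeterminacy_jacobian_rows_single_nonzero
    (n : ℕ) (hn : 1 ≤ n)
    (X : Type*) [Nonempty X]
    (p p' : Fin n → ℝ → X → ℝ)
    (hp_pos : ∀ (k : Fin n) (t : ℝ) (x : X), 0 < p k t x)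
    (hp'_pos : ∀ (k : Fin n) (t : ℝ) (x : X), 0 < p' k t x)
    (hp_smooth : ∀ (k : Fin n) (x : X), ContDiff ℝ 2 (fun t => p k t x))
    (hp'_smooth : ∀ (k : Fin n) (x : X), ContDiff ℝ 2 (fun t => p' k t x))
    (h : (Fin n → ℝ) → (Fin n → ℝ))
    (hbij : Function.Bijective h)
    (hC2 : ContDiff ℝ 2 h)
    (g : (Fin n → ℝ) → (Fin n → ℝ))
    (hg : Function.LeftInverse g h ∧ Function.RightInverse g h)
    (hgC2 : ContDiff ℝ 2 g)
    (hmatch : ∀ x : X,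
      Measure.map h
          ((volume : Measure (Fin n → ℝ)).withDensity
            fun s => ENNReal.ofReal (∏ k : Fin n, p k (s k) x)) =
        (volume : Measure (Fin n → ℝ)).withDensity
          fun s => ENNReal.ofReal (∏ k : Fin n, p' k (s k) x))
    (w : (Fin n → ℝ) → X → Fin (2 * n) → ℝ)
    (hw1 : ∀ (s : Fin n → ℝ) (x : X) (k : Fin n),
      w s x ⟨k.val, by omega⟩ =
        deriv (fun t => Real.log (p k t x)) (s k))
    (hw2 : ∀ (s : Fin n → ℝ) (x : X) (k : Fin n),
      w s x ⟨n + k.val, by omega⟩ =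
        deriv (deriv (fun t => Real.log (p k t x))) (s k))
    (hA3 : ∀ s : Fin n → ℝ, ∃ x : Fin (2 * n + 1) → X,
      LinearIndependent ℝ (fun j : Fin (2 * n) => w s (x j.succ) - w s (x 0))) :
    ∀ (shat : Fin n → ℝ) (k i j : Fin n), i ≠ j →
      fderiv ℝ g shat (Pi.single i 1) k * fderiv ℝ g shat (Pi.single j 1) k = 0 ∧
      fderiv ℝ (fun u => fderiv ℝ g u (Pi.single j 1) k) shat (Pi.single i 1)
        = 0 := by
  intro shat k i j hij
  -- positivity and continuity of the product densities
  have hρpos : ∀ (x : X) (s : Fin n → ℝ), 0 < ∏ k : Fin n, p k (s k) x :=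
    fun x s => Finset.prod_pos fun k _ => hp_pos k (s k) x
  have hρ'pos : ∀ (x : X) (s : Fin n → ℝ), 0 < ∏ k : Fin n, p' k (s k) x :=
    fun x s => Finset.prod_pos fun k _ => hp'_pos k (s k) x
  have hρc : ∀ x : X, Continuous fun s : Fin n → ℝ => ∏ k : Fin n, p k (s k) x :=
    fun x => continuous_finset_prod _ fun k _ =>
      (hp_smooth k x).continuous.comp (continuous_apply k)
  have hρ'c : ∀ x : X, Continuous fun s : Fin n → ℝ => ∏ k : Fin n, p' k (s k) x :=
    fun x => continuous_finset_prod _ fun k _ =>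
      (hp'_smooth k x).continuous.comp (continuous_apply k)
  -- pointwise density identity
  have hdens : ∀ (x : X) (u : Fin n → ℝ),
      (∏ k : Fin n, p' k (u k) x) = |(fderiv ℝ g u).det| * ∏ k : Fin n, p k (g u k) x :=
    fun x => density_identity _ _ (hρc x) (hρ'c x) (hρpos x) (hρ'pos x) h g hgC2
      hC2.continuous hg.1 hg.2 (hmatch x)
  have hdetne : ∀ u : Fin n → ℝ, |(fderiv ℝ g u).det| ≠ 0 := by
    intro u h0
    obtain ⟨x₀⟩ := ‹Nonempty X›
    have hd := hdens x₀ u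
    rw [h0, zero_mul] at hd
    exact (hρ'pos x₀ u).ne' hd
  -- log identity
  have hlog : ∀ (x : X) (u : Fin n → ℝ),
      (∑ k : Fin n, Real.log (p' k (u k) x)) - ∑ k : Fin n, Real.log (p k (g u k) x)
        = Real.log |(fderiv ℝ g u).det| := by
    intro x u
    have h1 : Real.log (∏ k : Fin n, p' k (u k) x) = ∑ k : Fin n, Real.log (p' k (u k) x) :=
      Real.log_prod fun k _ => (hp'_pos k _ x).ne'
    have h2 : Real.log (∏ k : Fin n, p k (g u k) x) = ∑ k : Fin n, Real.log (p k (g u k) x) :=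
      Real.log_prod fun k _ => (hp_pos k _ x).ne'
    have h3 : Real.log (∏ k : Fin n, p' k (u k) x)
        = Real.log |(fderiv ℝ g u).det| + Real.log (∏ k : Fin n, p k (g u k) x) := by
      rw [hdens x u, Real.log_mul (hdetne u) (hρpos x (g u)).ne']
    rw [h1, h2] at h3
    linarith
  -- the x-dependent parts agree after swapping
  have hfun : ∀ x y : X,
      (fun v => (∑ k : Fin n, Real.log (p k (g v k) x)) + ∑ k : Fin n, Real.log (p' k (v k) y))
      = fun v => (∑ k : Fin n, Real.log (p k (g v k) y)) + ∑ k : Fin n, Real.log (p' k (v k) x) := by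
    intro x y
    funext v
    have hx := hlog x v
    have hy := hlog y v
    linarith
  -- second derivative formula applied to both sides
  have hLsm : ∀ (x : X) (k : Fin n), ContDiff ℝ 2 (fun t => Real.log (p k t x)) :=
    fun x k => (hp_smooth k x).log fun t => (hp_pos k t x).ne'
  have hMsm : ∀ (x : X) (k : Fin n), ContDiff ℝ 2 (fun t => Real.log (p' k t x)) :=
    fun x k => (hp'_smooth k x).log fun t => (hp'_pos k t x).ne'
  have key : ∀ x y : X,
      (∑ k : Fin n, (deriv (deriv (fun t => Real.log (p k t x))) (g shat k) *
            (fderiv ℝ g shat (Pi.single i 1) k * fderiv ℝ g shat (Pi.single j 1) k)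
          + deriv (fun t => Real.log (p k t x)) (g shat k) *
            fderiv ℝ (fun u => fderiv ℝ g u (Pi.single j 1) k) shat (Pi.single i 1)))
      = ∑ k : Fin n, (deriv (deriv (fun t => Real.log (p k t y))) (g shat k) *
            (fderiv ℝ g shat (Pi.single i 1) k * fderiv ℝ g shat (Pi.single j 1) k)
          + deriv (fun t => Real.log (p k t y)) (g shat k) *
            fderiv ℝ (fun u => fderiv ℝ g u (Pi.single j 1) k) shat (Pi.single i 1)) := by
    intro x y
    have e1 := second_partial_formula g hgC2 (fun k t => Real.log (p k t x))
      (fun k t => Real.log (p' k t y)) (hLsm x) (hMsm y) i j hij shat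
    have e2 := second_partial_formula g hgC2 (fun k t => Real.log (p k t y))
      (fun k t => Real.log (p' k t x)) (hLsm y) (hMsm x) i j hij shat
    rw [← e1, ← e2, hfun x y]
  -- the linear system from A3
  obtain ⟨xs, hli⟩ := hA3 (g shat)
  have lt1 : ∀ k : Fin n, k.val < 2 * n := fun k => by omega
  have lt2 : ∀ k : Fin n, n + k.val < 2 * n := fun k => by omega
  set a : Fin n → ℝ := fun k =>
    fderiv ℝ (fun u => fderiv ℝ g u (Pi.single j 1) k) shat (Pi.single i 1) with ha
  set b : Fin n → ℝ := fun k =>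
    fderiv ℝ g shat (Pi.single i 1) k * fderiv ℝ g shat (Pi.single j 1) k with hb
  set φ : (Fin (2 * n) → ℝ) →ₗ[ℝ] ℝ :=
    ∑ k : Fin n, (a k • LinearMap.proj (⟨k.val, lt1 k⟩ : Fin (2 * n))
      + b k • LinearMap.proj (⟨n + k.val, lt2 k⟩ : Fin (2 * n))) with hφ
  have hφ_apply : ∀ u : Fin (2 * n) → ℝ,
      φ u = ∑ k : Fin n, (a k * u ⟨k.val, lt1 k⟩ + b k * u ⟨n + k.val, lt2 k⟩) := by
    intro u
    simp [hφ, LinearMap.sum_apply, LinearMap.add_apply, LinearMap.smul_apply,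
      LinearMap.proj_apply, smul_eq_mul]
  have hφv : ∀ m : Fin (2 * n),
      φ (w (g shat) (xs m.succ) - w (g shat) (xs 0)) = 0 := by
    intro m
    rw [hφ_apply]
    have hk1 : ∀ (x : X) (k : Fin n), w (g shat) x ⟨k.val, lt1 k⟩ =
        deriv (fun t => Real.log (p k t x)) (g shat k) := fun x k => hw1 (g shat) x k
    have hk2 : ∀ (x : X) (k : Fin n), w (g shat) x ⟨n + k.val, lt2 k⟩ =
        deriv (deriv (fun t => Real.log (p k t x))) (g shat k) := fun x k => hw2 (g shat) x k
    have hkey := key (xs m.succ) (xs 0)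
    have : ∑ k : Fin n, (a k * (w (g shat) (xs m.succ) - w (g shat) (xs 0)) ⟨k.val, lt1 k⟩
        + b k * (w (g shat) (xs m.succ) - w (g shat) (xs 0)) ⟨n + k.val, lt2 k⟩)
        = (∑ k : Fin n, (deriv (deriv (fun t => Real.log (p k t (xs m.succ)))) (g shat k) * b k
            + deriv (fun t => Real.log (p k t (xs m.succ))) (g shat k) * a k))
          - ∑ k : Fin n, (deriv (deriv (fun t => Real.log (p k t (xs 0)))) (g shat k) * b k
            + deriv (fun t => Real.log (p k t (xs 0))) (g shat k) * a k) := by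
      rw [← Finset.sum_sub_distrib]
      refine Finset.sum_congr rfl fun k _ => ?_
      simp only [Pi.sub_apply, hk1, hk2]
      ring
    rw [this]
    have hkey' : (∑ k : Fin n, (deriv (deriv (fun t => Real.log (p k t (xs m.succ)))) (g shat k) * b k
        + deriv (fun t => Real.log (p k t (xs m.succ))) (g shat k) * a k))
        = ∑ k : Fin n, (deriv (deriv (fun t => Real.log (p k t (xs 0)))) (g shat k) * b k
        + deriv (fun t => Real.log (p k t (xs 0))) (g shat k) * a k) := by
      simpa [ha, hb] using hkey
    rw [hkey', sub_self]
  -- φ vanishes identically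
  haveI : Nonempty (Fin (2 * n)) := ⟨⟨0, by omega⟩⟩
  have card_eq : Fintype.card (Fin (2 * n)) = Module.finrank ℝ (Fin (2 * n) → ℝ) := by
    simp [Module.finrank_pi]
  have hφ0 : φ = 0 := by
    apply (basisOfLinearIndependentOfCardEqFinrank hli card_eq).ext
    intro m
    rw [coe_basisOfLinearIndependentOfCardEqFinrank]
    simpa using hφv m
  -- evaluate φ on single vectors
  have key_eval : ∀ t : Fin (2 * n),
      ∑ k' : Fin n, (a k' * (Pi.single t 1 : Fin (2 * n) → ℝ) ⟨k'.val, lt1 k'⟩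
        + b k' * (Pi.single t 1 : Fin (2 * n) → ℝ) ⟨n + k'.val, lt2 k'⟩) = 0 :=
    fun t => by rw [← hφ_apply, hφ0]; simp
  have haz : a k = 0 := by
    have h1 := key_eval ⟨k.val, lt1 k⟩
    rw [Finset.sum_eq_single k] at h1
    · have hne2 : (⟨n + k.val, lt2 k⟩ : Fin (2 * n)) ≠ ⟨k.val, lt1 k⟩ := by
        have := k.isLt; simp only [ne_eq, Fin.mk.injEq]; omega
      rw [Pi.single_eq_same, Pi.single_eq_of_ne hne2, mul_one, mul_zero, add_zero] at h1
      exact h1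
    · intro k' _ hk'
      have hne1 : (⟨k'.val, lt1 k'⟩ : Fin (2 * n)) ≠ ⟨k.val, lt1 k⟩ := by
        simp only [ne_eq, Fin.mk.injEq]; exact fun hc => hk' (Fin.ext hc)
      have hne2 : (⟨n + k'.val, lt2 k'⟩ : Fin (2 * n)) ≠ ⟨k.val, lt1 k⟩ := by
        have := k.isLt; simp only [ne_eq, Fin.mk.injEq]; omega
      rw [Pi.single_eq_of_ne hne1, Pi.single_eq_of_ne hne2, mul_zero, mul_zero, add_zero]
    · intro hk; exact absurd (Finset.mem_univ k) hk
  have hbz : b k = 0 := by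
    have h1 := key_eval ⟨n + k.val, lt2 k⟩
    rw [Finset.sum_eq_single k] at h1
    · have hne1 : (⟨k.val, lt1 k⟩ : Fin (2 * n)) ≠ ⟨n + k.val, lt2 k⟩ := by
        have := k.isLt; simp only [ne_eq, Fin.mk.injEq]; omega
      rw [Pi.single_eq_of_ne hne1, Pi.single_eq_same, mul_zero, mul_one, zero_add] at h1
      exact h1
    · intro k' _ hk'
      have hne1 : (⟨k'.val, lt1 k'⟩ : Fin (2 * n)) ≠ ⟨n + k.val, lt2 k⟩ := by
        have := k'.isLt; simp only [ne_eq, Fin.mk.injEq]; omega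
      have hne2 : (⟨n + k'.val, lt2 k'⟩ : Fin (2 * n)) ≠ ⟨n + k.val, lt2 k⟩ := by
        simp only [ne_eq, Fin.mk.injEq]
        intro hc; exact hk' (Fin.ext (by omega))
      rw [Pi.single_eq_of_ne hne1, Pi.single_eq_of_ne hne2, mul_zero, mul_zero, add_zero]
    · intro hk; exact absurd (Finset.mem_univ k) hk
  exact ⟨hbz, haz⟩
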